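/- For a finite simple graph G on n vertices with m edges and arboricity at most α, the sum over all vertices u of d⁺(u)·deg(u) is at most 2·m·α, where d⁺(u) is the out-degree of u in the degree orientation. -/

import Mathlib

/-- The degree ordering: `u ≺ v` iff `deg u < deg v`, or degrees are equal and `u < v`
in the fixed linear order on vertices. -/
def DegPrec {V : Type*} [Fintype V] [LinearOrder V] (G : SimpleGraph V)
    [DecidableRel G.Adj] (u v : V) : Prop :=
  G.degree u < G.degree v ∨ (G.degree u = G.degree v ∧ u < v)

instance {V : Type*} [Fintype V] [LinearOrder V] (G : SimpleGraph V) [DecidableRel G.Adj] :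
    DecidableRel (DegPrec G) := fun _ _ => by unfold DegPrec; infer_instance

/-- Out-degree of `u` in the degree orientation. -/
def outDeg {V : Type*} [Fintype V] [LinearOrder V] (G : SimpleGraph V)
    [DecidableRel G.Adj] (u : V) : ℕ :=
  ((G.neighborFinset u).filter (fun v => DegPrec G u v)).card


/-- `G` has arboricity at most `α`: its edge set can be partitioned into at most `α` forests. -/
def HasArboricityLE {V : Type*} (G : SimpleGraph V) (α : ℕ) : Prop :=
  ∃ f : Sym2 V → Fin α,
    ∀ i : Fin α, (SimpleGraph.fromEdgeSet {e | e ∈ G.edgeSet ∧ f e = i}).IsAcyclic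

open SimpleGraph Finset

section Aux

variable {V : Type*}

lemma aux_isAcyclic_anti {G H : SimpleGraph V} (h : H ≤ G) (hG : G.IsAcyclic) : H.IsAcyclic :=
  fun _ c hc => hG (c.mapLe h) (hc.mapLe h)

/-- Every finite acyclic graph with an edge has a vertex incident to exactly one edge. -/
lemma aux_exists_leaf [Fintype V] [DecidableEq V] {F : SimpleGraph V} (hF : F.IsAcyclic)
    {e₀ : Sym2 V} (he₀ : e₀ ∈ F.edgeSet) :
    ∃ u e, e ∈ F.edgeSet ∧ u ∈ e ∧ ∀ e' ∈ F.edgeSet, u ∈ e' → e' = e := by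
  by_contra hcon
  push_neg at hcon
  -- hcon : ∀ u e, e ∈ edgeSet → u ∈ e → ∃ e' ∈ edgeSet, u ∈ e' ∧ e' ≠ e
  obtain ⟨a, b⟩ := e₀
  rw [SimpleGraph.mem_edgeSet] at he₀
  have key : ∀ n : ℕ, ∃ (u v : V) (p : F.Walk u v), p.IsPath ∧ n + 1 ≤ p.length := by
    intro n
    induction n with
    | zero =>
        exact ⟨a, b, (SimpleGraph.Path.singleton he₀).1, (SimpleGraph.Path.singleton he₀).2,
          by simp [SimpleGraph.Path.singleton]⟩
    | succ n ih =>
        obtain ⟨u, v, p, hp, hlen⟩ := ih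
        cases p with
        | nil => simp at hlen
        | @cons _ c _ hadj q =>
            -- u adj c, q : walk from c to v
            obtain ⟨e', he'E, hue', hne⟩ := hcon u s(u, c) hadj (by simp)
            -- e' = s(u, w)
            obtain ⟨w, rfl⟩ : ∃ w, e' = s(u, w) := by
              obtain ⟨x, y⟩ := e'
              rcases Sym2.mem_iff.mp hue' with rfl | rfl
              · exact ⟨y, rfl⟩
              · exact ⟨x, Sym2.eq_swap⟩
            rw [SimpleGraph.mem_edgeSet] at he'E
            have hwc : w ≠ c := by rintro rfl; exact hne rfl
            have hw : w ∉ (SimpleGraph.Walk.cons hadj q).support := by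
              intro hws
              have hwu : w ≠ u := fun h => F.irrefl (h ▸ he'E)
              -- take the initial segment of the path up to w; by uniqueness of paths it
              -- must equal the single-edge path, forcing w = c.
              have htU : ((SimpleGraph.Walk.cons hadj q).takeUntil w hws).IsPath :=
                hp.takeUntil hws
              have := hF.path_unique ⟨_, htU⟩ (SimpleGraph.Path.singleton he'E)
              have hlen1 : ((SimpleGraph.Walk.cons hadj q).takeUntil w hws).length = 1 := by
                have := congrArg (fun p : F.Path u w => p.1.length) this
                simpa [SimpleGraph.Path.singleton] using this
              have hwq : w ∈ q.support := by
                have hmem : w ∈ u :: q.support := by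
                  rw [← SimpleGraph.Walk.support_cons hadj q]; exact hws
                rcases List.mem_cons.mp hmem with h1 | h1
                · exact absurd h1 hwu
                · exact h1
              -- unfold takeUntil on a cons
              have hunfold : (SimpleGraph.Walk.cons hadj q).takeUntil w hws =
                  SimpleGraph.Walk.cons hadj (q.takeUntil w hwq) := by
                simp [SimpleGraph.Walk.takeUntil, hwu.symm]
              rw [hunfold, SimpleGraph.Walk.length_cons] at hlen1
              have : (q.takeUntil w hwq).length = 0 := by omega
              have hcw : c = w := (q.takeUntil w hwq).eq_of_length_eq_zero this
              exact hwc hcw.symm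
            refine ⟨w, v, SimpleGraph.Walk.cons he'E.symm (SimpleGraph.Walk.cons hadj q),
              hp.cons hw, ?_⟩
            rw [SimpleGraph.Walk.length_cons]
            omega
  obtain ⟨u, v, p, hp, hlen⟩ := key (Fintype.card V)
  have := hp.length_lt
  omega

/-- System of distinct representatives for the edges of a forest:
an injective choice of an endpoint for each edge. -/
lemma aux_forest_sdr [Fintype V] [DecidableEq V] [Nonempty V] :
    ∀ (s : Finset (Sym2 V)), (SimpleGraph.fromEdgeSet (↑s : Set (Sym2 V))).IsAcyclic →
      (∀ e ∈ s, ¬ e.IsDiag) →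
      ∃ g : Sym2 V → V, (∀ e ∈ s, g e ∈ e) ∧ Set.InjOn g (↑s : Set (Sym2 V)) := by
  intro s
  induction s using Finset.strongInduction with
  | _ s ih =>
    intro hacy hdiag
    rcases s.eq_empty_or_nonempty with rfl | ⟨e₀, he₀⟩
    · exact ⟨fun _ => Classical.arbitrary V, by simp, by simp⟩
    · have hedge : (SimpleGraph.fromEdgeSet (↑s : Set (Sym2 V))).edgeSet = ↑s := by
        rw [SimpleGraph.edgeSet_fromEdgeSet]
        ext e
        simp only [Set.mem_diff, Set.mem_setOf_eq, Finset.mem_coe, and_iff_left_iff_imp]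
        exact fun he => hdiag e he
      obtain ⟨u, e, heE, hue, huniq⟩ :=
        aux_exists_leaf hacy (hedge ▸ (Finset.mem_coe.mpr he₀))
      rw [hedge] at heE
      have heS : e ∈ s := heE
      set s' := s.erase e with hs'
      have hsub : s' ⊂ s := Finset.erase_ssubset heS
      have hle : SimpleGraph.fromEdgeSet (↑s' : Set (Sym2 V)) ≤
          SimpleGraph.fromEdgeSet ↑s :=
        SimpleGraph.fromEdgeSet_mono (by exact_mod_cast Finset.erase_subset _ _)
      obtain ⟨g', hg'mem, hg'inj⟩ := ih s' hsub (aux_isAcyclic_anti hle hacy)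
        (fun e' he' => hdiag e' (Finset.mem_of_mem_erase he'))
      have hnotu : ∀ e' ∈ s', u ∉ e' := by
        intro e' he' hue'
        have he'e : e' = e :=
          huniq e' (hedge.symm ▸ (Finset.mem_coe.mpr (Finset.mem_of_mem_erase he'))) hue'
        exact (Finset.ne_of_mem_erase he') he'e
      refine ⟨fun x => if x = e then u else g' x, ?_, ?_⟩
      · intro x hx
        by_cases hxe : x = e
        · simp [hxe, hue]
        · simpa [hxe] using hg'mem x (Finset.mem_erase.mpr ⟨hxe, hx⟩)
      · intro x hx y hy hxy
        change (if x = e then u else g' x) = (if y = e then u else g' y) at hxy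
        simp only [Finset.mem_coe] at hx hy
        by_cases hxe : x = e <;> by_cases hye : y = e
        · rw [hxe, hye]
        · exfalso
          have hy' : y ∈ s' := Finset.mem_erase.mpr ⟨hye, hy⟩
          have hgy : g' y ∈ y := hg'mem y hy'
          rw [if_pos hxe, if_neg hye] at hxy
          exact hnotu y hy' (hxy ▸ hgy)
        · exfalso
          have hx' : x ∈ s' := Finset.mem_erase.mpr ⟨hxe, hx⟩
          have hgx : g' x ∈ x := hg'mem x hx'
          rw [if_neg hxe, if_pos hye] at hxy
          exact hnotu x hx' (hxy ▸ hgx)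
        · rw [if_neg hxe, if_neg hye] at hxy
          exact hg'inj (Finset.mem_coe.mpr (Finset.mem_erase.mpr ⟨hxe, hx⟩))
            (Finset.mem_coe.mpr (Finset.mem_erase.mpr ⟨hye, hy⟩)) hxy

end Aux

section Min

variable {V : Type*} [Fintype V] [LinearOrder V] (G : SimpleGraph V) [DecidableRel G.Adj]

lemma degPrec_total {u v : V} (h : u ≠ v) : DegPrec G u v ∨ DegPrec G v u := by
  unfold DegPrec
  rcases lt_trichotomy (G.degree u) (G.degree v) with hd | hd | hd
  · exact Or.inl (Or.inl hd)
  · rcases lt_or_gt_of_ne h with hv | hv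
    · exact Or.inl (Or.inr ⟨hd, hv⟩)
    · exact Or.inr (Or.inr ⟨hd.symm, hv⟩)
  · exact Or.inr (Or.inl hd)

lemma degPrec_asymm {u v : V} (h : DegPrec G u v) : ¬ DegPrec G v u := by
  unfold DegPrec at *
  rcases h with h | ⟨h1, h2⟩
  · rintro (h' | ⟨h1', _⟩) <;> omega
  · rintro (h' | ⟨_, h2'⟩)
    · omega
    · exact absurd h2 (not_lt_of_gt h2')

lemma degPrec_degree_le {u v : V} (h : DegPrec G u v) : G.degree u ≤ G.degree v := by
  rcases h with h | ⟨h, _⟩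
  · exact h.le
  · exact h.le

/-- The `DegPrec`-smaller endpoint of an edge. -/
noncomputable def minEnd : Sym2 V → V :=
  Sym2.lift ⟨fun u v => if DegPrec G u v then u else v, by
    intro u v
    dsimp only
    by_cases h : DegPrec G u v
    · rw [if_pos h, if_neg (degPrec_asymm G h)]
    · by_cases huv : u = v
      · subst huv; simp
      · rcases degPrec_total G huv with h' | h'
        · exact absurd h' h
        · rw [if_neg h, if_pos h']⟩

/-- The `DegPrec`-larger endpoint of an edge. -/
noncomputable def maxEnd : Sym2 V → V :=
  Sym2.lift ⟨fun u v => if DegPrec G u v then v else u, by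
    intro u v
    dsimp only
    by_cases h : DegPrec G u v
    · rw [if_pos h, if_neg (degPrec_asymm G h)]
    · by_cases huv : u = v
      · subst huv; simp
      · rcases degPrec_total G huv with h' | h'
        · exact absurd h' h
        · rw [if_neg h, if_pos h']⟩

lemma minEnd_spec {e : Sym2 V} (he : e ∈ G.edgeSet) :
    G.Adj (minEnd G e) (maxEnd G e) ∧ DegPrec G (minEnd G e) (maxEnd G e) ∧
      s(minEnd G e, maxEnd G e) = e := by
  obtain ⟨a, b⟩ := e
  rw [SimpleGraph.mem_edgeSet] at he
  by_cases hd : DegPrec G a b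
  · simp only [minEnd, maxEnd, Sym2.lift_mk, if_pos hd]
    exact ⟨he, hd, by trivial⟩
  · have hd' : DegPrec G b a := (degPrec_total G he.ne).resolve_left hd
    simp only [minEnd, maxEnd, Sym2.lift_mk, if_neg hd]
    exact ⟨he.symm, hd', Sym2.eq_swap⟩

lemma minEnd_degree_le {e : Sym2 V} (he : e ∈ G.edgeSet) {x : V} (hx : x ∈ e) :
    G.degree (minEnd G e) ≤ G.degree x := by
  have hspec := minEnd_spec G he
  have hxe : x ∈ s(minEnd G e, maxEnd G e) := hspec.2.2.symm ▸ hx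
  rcases Sym2.mem_iff.mp hxe with rfl | rfl
  · exact le_refl _
  · exact degPrec_degree_le G hspec.2.1

lemma minEnd_mk {u v : V} (h : DegPrec G u v) :
    minEnd G s(u, v) = u := by simp [minEnd, if_pos h]

lemma maxEnd_mk {u v : V} (h : DegPrec G u v) :
    maxEnd G s(u, v) = v := by simp [maxEnd, if_pos h]

/-- The out-degree weighted sum equals the sum over edges of the degree of the
`DegPrec`-smaller endpoint. -/
lemma sum_outDeg_eq :
    ∑ u, outDeg G u * G.degree u = ∑ e ∈ G.edgeFinset, G.degree (minEnd G e) := by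
  classical
  have h1 : ∑ u, outDeg G u * G.degree u =
      ∑ x ∈ Finset.univ.sigma
        (fun u => (G.neighborFinset u).filter (fun v => DegPrec G u v)),
        G.degree x.1 := by
    rw [Finset.sum_sigma]
    refine Finset.sum_congr rfl fun u _ => ?_
    simp [outDeg, Finset.sum_const, mul_comm]
    rw [Finset.sum_const_nat (m := G.degree u) (fun _ _ => rfl)]
    convert mul_comm _ _ using 2
  rw [h1]
  refine Finset.sum_nbij' (fun x => s(x.1, x.2)) (fun e => ⟨minEnd G e, maxEnd G e⟩)
    ?_ ?_ ?_ ?_ ?_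
  · intro x hx
    simp only [Finset.mem_sigma, Finset.mem_filter, SimpleGraph.mem_neighborFinset] at hx
    simpa [SimpleGraph.mem_edgeFinset] using hx.2.1
  · intro e he
    rw [SimpleGraph.mem_edgeFinset] at he
    have hspec := minEnd_spec G he
    simp only [Finset.mem_sigma, Finset.mem_filter, SimpleGraph.mem_neighborFinset]
    exact ⟨Finset.mem_univ _, hspec.1, hspec.2.1⟩
  · intro x hx
    simp only [Finset.mem_sigma, Finset.mem_filter, SimpleGraph.mem_neighborFinset] at hx
    show (⟨minEnd G s(x.1, x.2), maxEnd G s(x.1, x.2)⟩ : (_ : V) × V) = x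
    rw [minEnd_mk G hx.2.2, maxEnd_mk G hx.2.2]
  · intro e he
    rw [SimpleGraph.mem_edgeFinset] at he
    exact (minEnd_spec G he).2.2
  · intro x hx
    simp only [Finset.mem_sigma, Finset.mem_filter, SimpleGraph.mem_neighborFinset] at hx
    show G.degree x.1 = G.degree (minEnd G s(x.1, x.2))
    rw [minEnd_mk G hx.2.2]

end Min

/-- `Σ_u d⁺(u)·deg(u) ≤ 2·m·α` for graphs of arboricity at most `α`. -/
theorem sum_outDeg_mul_degree_le {V : Type*} [Fintype V] [LinearOrder V]
    (G : SimpleGraph V) [DecidableRel G.Adj] (α : ℕ) (hG : HasArboricityLE G α) :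
    ∑ u, outDeg G u * G.degree u ≤ 2 * G.edgeFinset.card * α := by
  classical
  cases isEmpty_or_nonempty V with
  | inl h => simp [Finset.univ_eq_empty]
  | inr h =>
    obtain ⟨f, hf⟩ := hG
    rw [sum_outDeg_eq G]
    rw [← Finset.sum_fiberwise G.edgeFinset f (fun e => G.degree (minEnd G e))]
    have hper : ∀ i : Fin α,
        ∑ e ∈ G.edgeFinset.filter (fun e => f e = i), G.degree (minEnd G e) ≤
          2 * G.edgeFinset.card := by
      intro i
      set Ei := G.edgeFinset.filter (fun e => f e = i) with hEi
      have hset : {e | e ∈ G.edgeSet ∧ f e = i} = (↑Ei : Set (Sym2 V)) := by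
        ext e
        simp [hEi, SimpleGraph.mem_edgeFinset]
      have hacy : (SimpleGraph.fromEdgeSet (↑Ei : Set (Sym2 V))).IsAcyclic := by
        rw [← hset]; exact hf i
      have hdiag : ∀ e ∈ Ei, ¬ e.IsDiag := by
        intro e he
        have : e ∈ G.edgeSet := SimpleGraph.mem_edgeFinset.mp (Finset.mem_filter.mp he).1
        exact G.not_isDiag_of_mem_edgeSet this
      obtain ⟨g, hgmem, hginj⟩ := aux_forest_sdr Ei hacy hdiag
      calc ∑ e ∈ Ei, G.degree (minEnd G e)
          ≤ ∑ e ∈ Ei, G.degree (g e) := by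
            refine Finset.sum_le_sum fun e he => ?_
            have heG : e ∈ G.edgeSet :=
              SimpleGraph.mem_edgeFinset.mp (Finset.mem_filter.mp he).1
            exact minEnd_degree_le G heG (hgmem e he)
        _ = ∑ v ∈ Ei.image g, G.degree v := by
            rw [Finset.sum_image (fun x hx y hy hxy =>
              hginj (Finset.mem_coe.mpr hx) (Finset.mem_coe.mpr hy) hxy)]
        _ ≤ ∑ v, G.degree v :=
            Finset.sum_le_sum_of_subset (Finset.subset_univ _)
        _ = 2 * G.edgeFinset.card := G.sum_degrees_eq_twice_card_edges
    calc ∑ i : Fin α, ∑ e ∈ G.edgeFinset.filter (fun e => f e = i),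
            G.degree (minEnd G e)
        ≤ ∑ _i : Fin α, 2 * G.edgeFinset.card := Finset.sum_le_sum fun i _ => hper i
      _ = 2 * G.edgeFinset.card * α := by
          rw [Finset.sum_const, Finset.card_univ, Fintype.card_fin, smul_eq_mul]
          ring
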